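/- For every α with 0 ≤ α < 1/2 and either choice of sign, setting s = (1 ± √(1−2α))/2, one has h(α) + f_A(α, s) = h(s); equivalently, f_A(α, (1 ± √(1−2α))/2) − h((1 ± √(1−2α))/2) = −h(α). -/

import Mathlib

/-- Binary entropy function (base-2 logs), with the convention `0 * log 0 = 0`. -/
noncomputable def binEnt (x : ℝ) : ℝ :=
  -(x * Real.logb 2 x) - (1 - x) * Real.logb 2 (1 - x)

/-- The spectral shape exponent of the accumulator:
`f_A(α,β) = α − h(β) + (1−α)·h((β−α/2)/(1−α))`. -/
noncomputable def fA (α β : ℝ) : ℝ :=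
  α - binEnt β + (1 - α) * binEnt ((β - α / 2) / (1 - α))

/-- The spectral shape exponent of the discrete derivative:
`f_D(α,β) = (1−α)·h(β/(2(1−α))) + α·h(β/(2α)) − h(α)`. -/
noncomputable def fD (α β : ℝ) : ℝ :=
  (1 - α) * binEnt (β / (2 * (1 - α))) + α * binEnt (β / (2 * α)) - binEnt α

lemma key_identity (s : ℝ) (hs0 : 0 < s) (hs1 : s < 1) :
    binEnt (2 * s * (1 - s)) + fA (2 * s * (1 - s)) s = binEnt s := by
  have h1s : (0:ℝ) < 1 - s := by linarith
  have hq : (0:ℝ) < s ^ 2 + (1 - s) ^ 2 := by positivity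
  set a := Real.logb 2 s with ha
  set b := Real.logb 2 (1 - s) with hb
  set c := Real.logb 2 (s ^ 2 + (1 - s) ^ 2) with hc
  have e1 : Real.logb 2 (2 * s * (1 - s)) = 1 + a + b := by
    rw [Real.logb_mul (by positivity) (by positivity),
        Real.logb_mul (by norm_num) (by positivity)]
    norm_num
    rfl
  have e6 : 1 - 2 * s * (1 - s) = s ^ 2 + (1 - s) ^ 2 := by ring
  have e2 : (s - 2 * s * (1 - s) / 2) / (1 - 2 * s * (1 - s))
      = s ^ 2 / (s ^ 2 + (1 - s) ^ 2) := by
    rw [e6]; field_simp; ring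
  have e3 : Real.logb 2 (s ^ 2 / (s ^ 2 + (1 - s) ^ 2)) = 2 * a - c := by
    rw [Real.logb_div (by positivity) (by positivity), Real.logb_pow]
    push_cast; ring
  have e4 : 1 - s ^ 2 / (s ^ 2 + (1 - s) ^ 2) = (1 - s) ^ 2 / (s ^ 2 + (1 - s) ^ 2) := by
    field_simp
    ring
  have e5 : Real.logb 2 ((1 - s) ^ 2 / (s ^ 2 + (1 - s) ^ 2)) = 2 * b - c := by
    rw [Real.logb_div (by positivity) (by positivity), Real.logb_pow]
    push_cast; ring
  simp only [binEnt, fA]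
  rw [e2, e4, e1, e3, e5, e6]
  field_simp
  ring

/-- For `0 ≤ α < 1/2` and either sign, with `s = (1 ± √(1−2α))/2` one has
`h(α) + f_A(α, s) = h(s)`. -/
theorem entropy_fA_sqrt_identity (α : ℝ) (hα0 : 0 ≤ α) (hα1 : α < 1 / 2) :
    (binEnt α + fA α ((1 + Real.sqrt (1 - 2 * α)) / 2)
        = binEnt ((1 + Real.sqrt (1 - 2 * α)) / 2)) ∧
    (binEnt α + fA α ((1 - Real.sqrt (1 - 2 * α)) / 2)
        = binEnt ((1 - Real.sqrt (1 - 2 * α)) / 2)) := by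
  rcases eq_or_lt_of_le hα0 with h0 | h0
  · -- α = 0
    subst h0
    norm_num [binEnt, fA, Real.sqrt_one, Real.logb_one]
  · have hr0 : 0 < 1 - 2 * α := by linarith
    have hrsq : Real.sqrt (1 - 2 * α) ^ 2 = 1 - 2 * α := Real.sq_sqrt hr0.le
    have hr1 : Real.sqrt (1 - 2 * α) < 1 := by
      nlinarith [Real.sqrt_nonneg (1 - 2 * α)]
    have hrpos : 0 < Real.sqrt (1 - 2 * α) := Real.sqrt_pos.mpr hr0
    constructor
    · have hs0 : 0 < (1 + Real.sqrt (1 - 2 * α)) / 2 := by linarith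
      have hs1 : (1 + Real.sqrt (1 - 2 * α)) / 2 < 1 := by linarith
      have hα : 2 * ((1 + Real.sqrt (1 - 2 * α)) / 2) * (1 - (1 + Real.sqrt (1 - 2 * α)) / 2)
          = α := by nlinarith
      have := key_identity _ hs0 hs1
      rwa [hα] at this
    · have hs0 : 0 < (1 - Real.sqrt (1 - 2 * α)) / 2 := by linarith
      have hs1 : (1 - Real.sqrt (1 - 2 * α)) / 2 < 1 := by linarith
      have hα : 2 * ((1 - Real.sqrt (1 - 2 * α)) / 2) * (1 - (1 - Real.sqrt (1 - 2 * α)) / 2)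
          = α := by nlinarith
      have := key_identity _ hs0 hs1
      rwa [hα] at this
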